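/- If X is a weakly connected loopless digraph whose A-Laplacian L = Δ⁺ − A is normal, then X is eulerian, i.e., every vertex has equal in-degree and out-degree. -/

import Mathlib

open Matrix Finset

def adjMat {V : Type*} [Fintype V] (R : V → V → Prop) [DecidableRel R] :
    Matrix V V ℝ := fun u v => if R u v then 1 else 0

def outDeg {V : Type*} [Fintype V] (R : V → V → Prop) [DecidableRel R] (u : V) : ℕ :=
  (Finset.univ.filter (fun v => R u v)).card

def inDeg {V : Type*} [Fintype V] (R : V → V → Prop) [DecidableRel R] (u : V) : ℕ :=
  (Finset.univ.filter (fun w => R w u)).card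

def lap {V : Type*} [Fintype V] [DecidableEq V] (R : V → V → Prop) [DecidableRel R] :
    Matrix V V ℝ :=
  Matrix.diagonal (fun u => (outDeg R u : ℝ)) - adjMat R

theorem stmt3 {V : Type*} [Fintype V] [DecidableEq V] (R : V → V → Prop) [DecidableRel R]
    (hloopless : ∀ u, ¬ R u u)
    (hweakconn : ∀ u v : V, Relation.ReflTransGen (fun a b => R a b ∨ R b a) u v)
    (hnormal : lap R * (lap R)ᵀ = (lap R)ᵀ * lap R) :
    ∀ u : V, inDeg R u = outDeg R u := by
  intro u
  have key : ∀ a b : V, lap R a b * lap R a b =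
      (if a = b then (outDeg R a : ℝ)^2 else 0) + adjMat R a b := by
    intro a b
    rw [lap, Matrix.sub_apply]
    unfold adjMat
    by_cases hab : a = b
    · subst hab
      simp [Matrix.diagonal_apply_eq, hloopless a]
      ring
    · simp only [Matrix.sub_apply, Matrix.diagonal_apply_ne _ hab, if_neg hab]
      split <;> norm_num
  have h := congrFun (congrFun hnormal u) u
  simp only [Matrix.mul_apply, Matrix.transpose_apply] at h
  have h1 : ∑ v, lap R u v * lap R u v = (outDeg R u : ℝ)^2 + (outDeg R u : ℝ) := by
    simp only [key]
    rw [Finset.sum_add_distrib]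
    congr 1
    · simp
    · unfold adjMat outDeg
      rw [Finset.sum_boole]
  have h2 : ∑ w, lap R w u * lap R w u = (outDeg R u : ℝ)^2 + (inDeg R u : ℝ) := by
    simp only [key]
    rw [Finset.sum_add_distrib]
    congr 1
    · rw [Finset.sum_ite_eq' Finset.univ u (fun w => (outDeg R w : ℝ)^2)]
      simp
    · unfold adjMat inDeg
      rw [Finset.sum_boole]
  rw [h1, h2] at h
  have : (inDeg R u : ℝ) = (outDeg R u : ℝ) := by linarith
  exact_mod_cast this
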